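/- Define f(x) = e^x · E₁(x) for x > 0, where E₁(x) = ∫_1^∞ e^{−t x}/t dt is the exponential integral. Then f is strictly decreasing on (0, ∞), f(x) → ∞ as x → 0⁺, and f(x) → 0 as x → ∞. -/

import Mathlib

open Real Filter MeasureTheory Set

noncomputable def gAux (x : ℝ) : ℝ := ∫ u in Set.Ioi (0:ℝ), Real.exp (-u) / (u + x)

lemma gAux_integrableOn {x : ℝ} (hx : 0 < x) :
    IntegrableOn (fun u => Real.exp (-u) / (u + x)) (Set.Ioi 0) := by
  have hexp : IntegrableOn (fun u : ℝ => Real.exp (-u) * x⁻¹) (Set.Ioi 0) := by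
    have : IntegrableOn (fun u : ℝ => Real.exp (-1 * u)) (Set.Ioi 0) :=
      exp_neg_integrableOn_Ioi 0 one_pos
    simpa [IntegrableOn] using this.mul_const x⁻¹
  have hc : ContinuousOn (fun u : ℝ => Real.exp (-u) / (u + x)) (Set.Ioi 0) := by
    apply ContinuousOn.div
    · exact (Real.continuous_exp.comp continuous_neg).continuousOn
    · exact (continuous_add_right x).continuousOn
    · intro u hu
      have h0 : (0:ℝ) < u := hu
      exact (by linarith : (0:ℝ) < u + x).ne'
  apply hexp.mono' (hc.aestronglyMeasurable measurableSet_Ioi)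
  filter_upwards [ae_restrict_mem measurableSet_Ioi] with u hu
  have hu0 : (0:ℝ) < u := hu
  have hux : (0:ℝ) < u + x := by linarith
  rw [Real.norm_eq_abs, abs_of_nonneg (div_nonneg (Real.exp_pos _).le hux.le),
    div_eq_mul_inv]
  exact mul_le_mul_of_nonneg_left (inv_anti₀ hx (by linarith)) (Real.exp_pos _).le

lemma key {x : ℝ} (hx : 0 < x) :
    Real.exp x * ∫ t in Set.Ioi (1:ℝ), Real.exp (-(t * x)) / t = gAux x := by
  have h1 : (∫ t in Set.Ioi (1:ℝ), Real.exp (-(t * x)) / t)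
      = ∫ s in Set.Ioi x, Real.exp (-s) / s := by
    have : ∀ t : ℝ, Real.exp (-(t * x)) / t = x * (Real.exp (-(t*x)) / (t * x)) := by
      intro t
      rw [mul_div_assoc']
      rw [mul_comm t x, mul_div_mul_left _ _ hx.ne']
    simp_rw [this]
    rw [MeasureTheory.integral_const_mul,
      integral_comp_mul_right_Ioi (fun s => Real.exp (-s) / s) 1 hx]
    simp [smul_eq_mul, ← mul_assoc, mul_inv_cancel₀ hx.ne']
  have h2 : (∫ s in Set.Ioi x, Real.exp (-s) / s)
      = ∫ u in Set.Ioi (0:ℝ), Real.exp (-(u + x)) / (u + x) := by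
    have mp : MeasurePreserving (fun u : ℝ => u + x) volume volume :=
      measurePreserving_add_right volume x
    have emb : MeasurableEmbedding (fun u : ℝ => u + x) :=
      (Homeomorph.addRight x).isClosedEmbedding.measurableEmbedding
    have := mp.setIntegral_preimage_emb emb (fun s => Real.exp (-s) / s) (Set.Ioi x)
    rw [preimage_add_const_Ioi, sub_self] at this
    exact this.symm
  rw [h1, h2, ← MeasureTheory.integral_const_mul]
  congr 1; ext u
  rw [mul_div_assoc', ← Real.exp_add]
  ring_nf

lemma gAux_strictAnti : StrictAntiOn gAux (Set.Ioi 0) := by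
  intro a ha b hb hab
  have ha : (0:ℝ) < a := ha
  have hb : (0:ℝ) < b := hb
  have hia := gAux_integrableOn ha
  have hib := gAux_integrableOn hb
  have hsub : gAux a - gAux b
      = ∫ u in Set.Ioi (0:ℝ), (Real.exp (-u) / (u + a) - Real.exp (-u) / (u + b)) := by
    rw [MeasureTheory.integral_sub hia hib]; rfl
  have hpos : 0 < ∫ u in Set.Ioi (0:ℝ),
      (Real.exp (-u) / (u + a) - Real.exp (-u) / (u + b)) := by
    rw [setIntegral_pos_iff_support_of_nonneg_ae]
    · have : Set.Ioi (0:ℝ) ⊆ Function.support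
          (fun u => Real.exp (-u) / (u + a) - Real.exp (-u) / (u + b)) ∩ Set.Ioi 0 := by
        intro u hu
        have hu0 : (0:ℝ) < u := hu
        refine ⟨?_, hu⟩
        have h1 : Real.exp (-u) / (u + b) < Real.exp (-u) / (u + a) := by
          apply div_lt_div_of_pos_left (Real.exp_pos _) (by linarith) (by linarith)
        simp only [Function.mem_support]
        exact sub_ne_zero.mpr (ne_of_gt h1)
      refine lt_of_lt_of_le ?_ (measure_mono this)
      simp [Real.volume_Ioi]
    · filter_upwards [ae_restrict_mem measurableSet_Ioi] with u hu
      have hu0 : (0:ℝ) < u := hu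
      have h1 : Real.exp (-u) / (u + b) ≤ Real.exp (-u) / (u + a) := by
        apply div_le_div_of_nonneg_left (Real.exp_pos _).le (by linarith) (by linarith)
      simp only [Pi.zero_apply]
      linarith
    · exact hia.sub hib
  have := hsub ▸ hpos
  linarith

lemma gAux_tendsto_top : Tendsto gAux (nhdsWithin 0 (Set.Ioi 0)) atTop := by
  have hlow : ∀ x : ℝ, 0 < x →
      Real.exp (-1) * (Real.log (1 + x) - Real.log x) ≤ gAux x := by
    intro x hx
    have h1 : (∫ u in Set.Ioc (0:ℝ) 1, Real.exp (-1) / (u + x))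
        ≤ ∫ u in Set.Ioc (0:ℝ) 1, Real.exp (-u) / (u + x) := by
      apply setIntegral_mono_on
      · have hc : ContinuousOn (fun u : ℝ => Real.exp (-1) / (u + x)) (Set.Icc 0 1) := by
          apply continuousOn_const.div (continuous_add_right x).continuousOn
          intro u hu
          have := hu.1
          exact (by linarith : (0:ℝ) < u + x).ne'
        exact (hc.integrableOn_Icc).mono_set Set.Ioc_subset_Icc_self
      · exact (gAux_integrableOn hx).mono_set Set.Ioc_subset_Ioi_self
      · exact measurableSet_Ioc
      · intro u hu
        obtain ⟨hu0, hu1⟩ := hu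
        have hux : (0:ℝ) < u + x := by linarith
        exact (div_le_div_iff_of_pos_right hux).2 (Real.exp_le_exp.2 (by linarith))
    have h2 : (∫ u in Set.Ioc (0:ℝ) 1, Real.exp (-u) / (u + x)) ≤ gAux x := by
      apply setIntegral_mono_set (gAux_integrableOn hx)
      · filter_upwards [ae_restrict_mem measurableSet_Ioi] with u hu
        have hu0 : (0:ℝ) < u := hu
        positivity
      · exact HasSubset.Subset.eventuallyLE Set.Ioc_subset_Ioi_self
    have h3 : (∫ u in Set.Ioc (0:ℝ) 1, Real.exp (-1) / (u + x))
        = Real.exp (-1) * (Real.log (1 + x) - Real.log x) := by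
      simp_rw [div_eq_mul_inv]
      rw [MeasureTheory.integral_const_mul]
      congr 1
      have : (∫ u in Set.Ioc (0:ℝ) 1, (u + x)⁻¹) = ∫ u in (0:ℝ)..1, (u + x)⁻¹ := by
        rw [intervalIntegral.integral_of_le zero_le_one]
      rw [this, intervalIntegral.integral_comp_add_right (fun u => u⁻¹) x, zero_add,
        integral_inv_of_pos hx (by linarith),
        Real.log_div (by linarith) hx.ne']
    calc Real.exp (-1) * (Real.log (1 + x) - Real.log x)
        = ∫ u in Set.Ioc (0:ℝ) 1, Real.exp (-1) / (u + x) := h3.symm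
      _ ≤ ∫ u in Set.Ioc (0:ℝ) 1, Real.exp (-u) / (u + x) := h1
      _ ≤ gAux x := h2
  have hL : Tendsto (fun x : ℝ => Real.exp (-1) * (Real.log (1 + x) - Real.log x))
      (nhdsWithin 0 (Set.Ioi 0)) atTop := by
    apply Tendsto.const_mul_atTop (Real.exp_pos _)
    simp_rw [sub_eq_add_neg]
    apply tendsto_atTop_add_left_of_le' _ (0:ℝ)
    · filter_upwards [self_mem_nhdsWithin] with x (hx : (0:ℝ) < x)
      exact Real.log_nonneg (by linarith)
    · exact tendsto_neg_atBot_atTop.comp Real.tendsto_log_nhdsGT_zero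
  apply tendsto_atTop_mono' _ _ hL
  filter_upwards [self_mem_nhdsWithin] with x hx
  exact hlow x hx

lemma gAux_tendsto_zero : Tendsto gAux atTop (nhds 0) := by
  have h0 : ∀ x : ℝ, 0 < x → 0 ≤ gAux x := by
    intro x hx
    apply setIntegral_nonneg measurableSet_Ioi
    intro u hu
    have hu0 : (0:ℝ) < u := hu
    positivity
  have h1 : ∀ x : ℝ, 0 < x → gAux x ≤ x⁻¹ := by
    intro x hx
    have : gAux x ≤ ∫ u in Set.Ioi (0:ℝ), Real.exp (-u) * x⁻¹ := by
      apply setIntegral_mono_on (gAux_integrableOn hx)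
      · have : IntegrableOn (fun u : ℝ => Real.exp (-1 * u)) (Set.Ioi 0) :=
          exp_neg_integrableOn_Ioi 0 one_pos
        simpa [IntegrableOn] using this.mul_const x⁻¹
      · exact measurableSet_Ioi
      · intro u hu
        have hu0 : (0:ℝ) < u := hu
        rw [div_eq_mul_inv]
        exact mul_le_mul_of_nonneg_left (inv_anti₀ hx (by linarith)) (Real.exp_pos _).le
    calc gAux x ≤ ∫ u in Set.Ioi (0:ℝ), Real.exp (-u) * x⁻¹ := this
      _ = (∫ u in Set.Ioi (0:ℝ), Real.exp (-u)) * x⁻¹ := by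
          rw [MeasureTheory.integral_mul_const]
      _ = x⁻¹ := by rw [integral_exp_neg_Ioi_zero, one_mul]
  have hinv : Tendsto (fun x : ℝ => x⁻¹) atTop (nhds 0) := tendsto_inv_atTop_zero
  apply tendsto_of_tendsto_of_tendsto_of_le_of_le' tendsto_const_nhds hinv
  · filter_upwards [eventually_gt_atTop (0:ℝ)] with x hx using h0 x hx
  · filter_upwards [eventually_gt_atTop (0:ℝ)] with x hx using h1 x hx

theorem exp_expint_properties :
    let f : ℝ → ℝ := fun x =>
      Real.exp x * ∫ t in Set.Ioi (1:ℝ), Real.exp (-(t * x)) / t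
    StrictAntiOn f (Set.Ioi 0) ∧
    Tendsto f (nhdsWithin 0 (Set.Ioi 0)) atTop ∧
    Tendsto f atTop (nhds 0) := by
  intro f
  have hfg : ∀ x : ℝ, 0 < x → f x = gAux x := fun x hx => key hx
  refine ⟨?_, ?_, ?_⟩
  · intro a ha b hb hab
    rw [hfg a ha, hfg b hb]
    exact gAux_strictAnti ha hb hab
  · apply gAux_tendsto_top.congr'
    filter_upwards [self_mem_nhdsWithin] with x hx
    exact (hfg x hx).symm
  · apply gAux_tendsto_zero.congr'
    filter_upwards [eventually_gt_atTop (0:ℝ)] with x hx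
    exact (hfg x hx).symm
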